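/- Let p, q, r be natural numbers with q + r ≤ p, and let γ ∈ ℝ^{p×q} satisfy Assumption A3′: every submatrix of γ consisting of q + r rows has full column rank q. Let ξ ∈ ℝ^p and δ₀ ∈ ℝ^q, set β₀ = ξ − γδ₀, and assume 2‖β₀‖₀ ≤ p − q − r (Assumption A4′). Then for every δ₁ ∈ ℝ^q with ‖ξ − γδ₁‖₀ ≤ ‖β₀‖₀, one has δ₁ = δ₀ and hence ξ − γδ₁ = β₀; that is, the causal effect β₀ is identified as the unique sparsest vector of the form ξ − γδ. -/

import Mathlib

open Matrix

/-- The ℓ0 "norm": number of nonzero entries of a vector. -/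
noncomputable def l0norm {p : ℕ} (v : Fin p → ℝ) : ℕ :=
  (Finset.univ.filter (fun i => v i ≠ 0)).card

/-- Assumption A3′ with parameter r: every submatrix of γ consisting of q + r rows
has full column rank q, i.e. its columns are linearly independent. -/
def AssumptionA3' {p q : ℕ} (r : ℕ) (γ : Matrix (Fin p) (Fin q) ℝ) : Prop :=
  ∀ f : Fin (q + r) → Fin p, Function.Injective f →
    LinearIndependent ℝ (fun j : Fin q => (γ.submatrix f id)ᵀ j)

theorem stmt_6 {p q r : ℕ} (hqrp : q + r ≤ p)
    (γ : Matrix (Fin p) (Fin q) ℝ) (hA3' : AssumptionA3' r γ)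
    (ξ : Fin p → ℝ) (δ₀ : Fin q → ℝ) (β₀ : Fin p → ℝ)
    (hβ₀ : β₀ = ξ - γ.mulVec δ₀)
    (hsparse : 2 * l0norm β₀ ≤ p - q - r) :
    ∀ δ₁ : Fin q → ℝ, l0norm (ξ - γ.mulVec δ₁) ≤ l0norm β₀ →
      δ₁ = δ₀ ∧ ξ - γ.mulVec δ₁ = β₀ := by
  intro δ₁ hδ₁
  set β₁ := ξ - γ.mulVec δ₁ with hβ₁
  have hdiff : β₁ - β₀ = γ.mulVec (δ₀ - δ₁) := by
    rw [hβ₀, hβ₁, Matrix.mulVec_sub]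
    abel
  -- the support of β₁ - β₀ is small
  have hsupp : (Finset.univ.filter (fun i => (β₁ - β₀) i ≠ 0)).card ≤ p - (q + r) := by
    have hsub : (Finset.univ.filter (fun i => (β₁ - β₀) i ≠ 0)) ⊆
        (Finset.univ.filter (fun i => β₁ i ≠ 0)) ∪
        (Finset.univ.filter (fun i => β₀ i ≠ 0)) := by
      intro i hi
      simp only [Finset.mem_filter, Finset.mem_union, Finset.mem_univ, true_and] at hi ⊢
      by_contra h
      push_neg at h
      simp [Pi.sub_apply, h.1, h.2] at hi
    calc (Finset.univ.filter (fun i => (β₁ - β₀) i ≠ 0)).card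
        ≤ ((Finset.univ.filter (fun i => β₁ i ≠ 0)) ∪
           (Finset.univ.filter (fun i => β₀ i ≠ 0))).card := Finset.card_le_card hsub
      _ ≤ l0norm β₁ + l0norm β₀ := Finset.card_union_le _ _
      _ ≤ 2 * l0norm β₀ := by unfold l0norm at hδ₁ ⊢; omega
      _ ≤ p - q - r := hsparse
      _ = p - (q + r) := by omega
  -- zero set has card ≥ q + r
  set Z : Finset (Fin p) := Finset.univ.filter (fun i => (β₁ - β₀) i = 0) with hZ
  have hZcard : q + r ≤ Z.card := by
    have h := Finset.card_filter_add_card_filter_not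
      (s := (Finset.univ : Finset (Fin p))) (p := fun i => (β₁ - β₀) i = 0)
    simp only [Finset.card_univ, Fintype.card_fin] at h
    simp only [ne_eq] at hsupp
    rw [hZ]
    omega
  obtain ⟨S, hSZ, hScard⟩ := Finset.exists_subset_card_eq hZcard
  set f : Fin (q + r) → Fin p := fun i => S.orderEmbOfFin hScard i with hf
  have hfinj : Function.Injective f := (S.orderEmbOfFin hScard).injective
  have hli := hA3' f hfinj
  rw [Fintype.linearIndependent_iff] at hli
  have hzero : ∀ i, (β₁ - β₀) (f i) = 0 := by
    intro i
    have : f i ∈ Z := hSZ (S.orderEmbOfFin_mem hScard i)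
    simpa [hZ] using this
  have hsum : ∑ j, (δ₀ - δ₁) j • (fun i : Fin (q + r) => (γ.submatrix f id)ᵀ j i) = 0 := by
    funext i
    have h1 : (β₁ - β₀) (f i) = γ.mulVec (δ₀ - δ₁) (f i) := by rw [hdiff]
    rw [hzero i] at h1
    simp only [Finset.sum_apply, Pi.smul_apply, smul_eq_mul, Pi.zero_apply]
    rw [Matrix.mulVec] at h1
    simp only [dotProduct] at h1
    rw [← h1.symm] at *
    · exact Finset.sum_congr rfl (fun j _ => by simp [Matrix.transpose_apply, mul_comm]) |>.trans h1.symm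
  have hall : ∀ j, (δ₀ - δ₁) j = 0 := hli (δ₀ - δ₁) hsum
  have hδ : δ₁ = δ₀ := by
    funext j
    have := hall j
    simp only [Pi.sub_apply, sub_eq_zero] at this
    exact this.symm
  exact ⟨hδ, by rw [hβ₁, hδ, ← hβ₀]⟩
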